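/- The map C₄(ε,δ,η) = (1 - ε - δ/(1-η), δ, ε/(ε+δ)) has order 3 wherever defined, and its fixed points are precisely the triples with ε = η/(1+2η) and δ = (1-η)/(1+2η). -/

import Mathlib

noncomputable def refC4 : ℝ × ℝ × ℝ → ℝ × ℝ × ℝ :=
  fun p => (1 - p.1 - p.2.1 / (1 - p.2.2), p.2.1, p.1 / (p.1 + p.2.1))

theorem refC4_order_three_and_fixed_points :
    (∀ ε δ η : ℝ,
      (∀ k < 3, (refC4^[k] (ε, δ, η)).2.2 ≠ 1 ∧
        (refC4^[k] (ε, δ, η)).1 + (refC4^[k] (ε, δ, η)).2.1 ≠ 0) →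
      refC4^[3] (ε, δ, η) = (ε, δ, η)) ∧
    (∀ ε δ η : ℝ, η ≠ 1 → ε + δ ≠ 0 →
      (refC4 (ε, δ, η) = (ε, δ, η) ↔
        ε = η / (1 + 2 * η) ∧ δ = (1 - η) / (1 + 2 * η))) := by
  constructor
  · intro ε δ η h
    obtain ⟨h0a, h0b⟩ := h 0 (by norm_num)
    obtain ⟨h1a, h1b⟩ := h 1 (by norm_num)
    obtain ⟨h2a, h2b⟩ := h 2 (by norm_num)
    simp only [Function.iterate_succ, Function.iterate_zero, Function.comp_apply, id_eq,
      refC4] at *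
    have hη : (1:ℝ) - η ≠ 0 := fun hc => h0a (by linarith)
    have hδ : δ ≠ 0 := by
      intro hc
      apply h1a
      rw [hc, add_zero, div_self]
      intro hc2
      exact h0b (by rw [hc, hc2, add_zero])
    have k1 : 1 - η + η * ε - η * δ - ε ≠ 0 := by
      intro hc
      apply h1b
      have : (1 - ε - δ / (1 - η) + δ) * (1 - η) = 0 := by
        field_simp
        linarith
      rcases mul_eq_zero.1 this with h' | h'
      · exact h'
      · exact absurd h' hη
    have key : ∀ x : ℝ, x + δ ≠ 0 → δ / (1 - x / (x + δ)) = x + δ := by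
      intro x hx
      rw [show (1 : ℝ) - x / (x + δ) = δ / (x + δ) by field_simp; ring]
      field_simp
    rw [key ε h0b, key (1 - ε - δ / (1 - η)) h1b] at *
    have h2b' : 1 - (1 - ε - δ / (1 - η)) - (ε + δ) + δ ≠ 0 := h2b
    refine Prod.ext ?_ (Prod.ext rfl ?_) <;> simp only []
    · field_simp
      ring
    · rw [div_eq_iff h2b']
      field_simp
      ring
  · intro ε δ η hη hεδ
    have hη' : (1:ℝ) - η ≠ 0 := fun hc => hη (by linarith)
    constructor
    · intro hfix
      have h1 : 1 - ε - δ / (1 - η) = ε := congrArg Prod.fst hfix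
      have h2 : ε / (ε + δ) = η := congrArg (fun p => p.2.2) hfix
      have h2' : ε = η * (ε + δ) := by
        field_simp at h2; linarith [h2]
      have h1' : (1 - 2*ε) * (1 - η) = δ := by
        field_simp at h1; nlinarith [h1]
      have e3 : ε * (1 - η) = η * δ := by linear_combination h2'
      have e4 : ε * (1 - η) = (η * (1 - 2*ε)) * (1 - η) := by
        rw [e3, ← h1']; ring
      have e5 : ε = η * (1 - 2*ε) := mul_right_cancel₀ hη' e4
      have hne : (1:ℝ) + 2*η ≠ 0 := by
        intro hc
        have hhalf : η = -(1/2) := by linarith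
        rw [hhalf] at e5
        linarith
      have hε : ε = η / (1 + 2 * η) := by
        rw [eq_div_iff hne]
        linear_combination e5
      refine ⟨hε, ?_⟩
      rw [hε] at h1'
      field_simp at h1' ⊢
      linarith [h1']
    · rintro ⟨hε, hδ⟩
      have hne : (1:ℝ) + 2*η ≠ 0 := by
        intro hc
        rw [hc, div_zero] at hε hδ
        rw [hε, hδ] at hεδ
        exact hεδ (by ring)
      subst hε hδ
      simp only [refC4]
      have hne' : (1:ℝ) + η * 2 ≠ 0 := by rwa [mul_comm] at hne
      refine Prod.ext ?_ (Prod.ext rfl ?_) <;> simp only <;> field_simp <;> ring
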